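/- Let (M, j, ⊗, β) be a braided monoidal category and (C, •, η, μ) a left M-actegory. Define a right action by c ∘ m := m • c (on morphisms (f : c ⟶ d, g : m ⟶ n) ↦ g • f), with right unitor η^rev_c := η_c : c ≅ c ∘ j and right multiplicator μ^rev_{c,n,m} := μ_{m,n,c} ≫ (β_{m,n} • 𝟙_c) : (c ∘ n) ∘ m ⟶ c ∘ (n ⊗ m). Then (C, ∘, η^rev, μ^rev) is a right M-actegory, and together with • and the bimodulator ζ_{m,c,n} := μ_{m,n,c} ≫ (β_{m,n} • 𝟙_c) ≫ μ⁻¹_{n,m,c} : m • (c ∘ n) ⟶ (m • c) ∘ n, the triple (C, •, ∘, ζ) is an (M,M)-biactegory (called the mirroring of (C,•)). -/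

import Mathlib

open CategoryTheory Category MonoidalCategory

universe v₁ v₂ v₃ u₁ u₂ u₃

variable (M : Type u₁) [Category.{v₁} M] [MonoidalCategory M]
variable (C : Type u₂) [Category.{v₂} C]

/-- The data of a left actegory. -/
structure LeftActegoryData where
  actObj : M → C → C
  actHom : ∀ {m n : M} {c d : C}, (m ⟶ n) → (c ⟶ d) → (actObj m c ⟶ actObj n d)
  η : ∀ c : C, c ⟶ actObj (𝟙_ M) c
  η' : ∀ c : C, actObj (𝟙_ M) c ⟶ c
  μ : ∀ (m n : M) (c : C), actObj m (actObj n c) ⟶ actObj (m ⊗ n) c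
  μ' : ∀ (m n : M) (c : C), actObj (m ⊗ n) c ⟶ actObj m (actObj n c)

variable {M C}

/-- The laws of a left actegory. -/
structure IsLeftActegory (A : LeftActegoryData M C) : Prop where
  actHom_id : ∀ (m : M) (c : C), A.actHom (𝟙 m) (𝟙 c) = 𝟙 (A.actObj m c)
  actHom_comp : ∀ {m n p : M} {c d e : C} (g : m ⟶ n) (g' : n ⟶ p) (f : c ⟶ d) (f' : d ⟶ e),
      A.actHom (g ≫ g') (f ≫ f') = A.actHom g f ≫ A.actHom g' f'
  η_iso : ∀ c, A.η c ≫ A.η' c = 𝟙 c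
  η'_iso : ∀ c, A.η' c ≫ A.η c = 𝟙 _
  μ_iso : ∀ m n c, A.μ m n c ≫ A.μ' m n c = 𝟙 _
  μ'_iso : ∀ m n c, A.μ' m n c ≫ A.μ m n c = 𝟙 _
  η_nat : ∀ {c d : C} (f : c ⟶ d), f ≫ A.η d = A.η c ≫ A.actHom (𝟙 (𝟙_ M)) f
  μ_nat : ∀ {m m' n n' : M} {c c' : C} (g : m ⟶ m') (h : n ⟶ n') (f : c ⟶ c'),
      A.actHom g (A.actHom h f) ≫ A.μ m' n' c' = A.μ m n c ≫ A.actHom (g ⊗ₘ h) f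
  pentagon : ∀ (m n p : M) (c : C),
      A.μ m n (A.actObj p c) ≫ A.μ (m ⊗ n) p c ≫ A.actHom (α_ m n p).hom (𝟙 c)
        = A.actHom (𝟙 m) (A.μ n p c) ≫ A.μ m (n ⊗ p) c
  triangle_left : ∀ (m : M) (c : C),
      A.η (A.actObj m c) ≫ A.μ (𝟙_ M) m c = A.actHom (λ_ m).inv (𝟙 c)
  triangle_right : ∀ (m : M) (c : C),
      A.actHom (𝟙 m) (A.η c) ≫ A.μ m (𝟙_ M) c = A.actHom (ρ_ m).inv (𝟙 c)


variable (N : Type u₁) [Category.{v₁} N] [MonoidalCategory N]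

variable (C) in
/-- The data of a right actegory: an action `∘ : C × N ⥤ C` together with a
unitor `c ≅ c ∘ i`, a multiplicator `(c ∘ n) ∘ m ≅ c ∘ (n ⊗ m)` and their
(candidate) inverses. -/
structure RightActegoryData where
  actObj : C → N → C
  actHom : ∀ {c d : C} {n n' : N}, (c ⟶ d) → (n ⟶ n') → (actObj c n ⟶ actObj d n')
  η : ∀ c : C, c ⟶ actObj c (𝟙_ N)
  η' : ∀ c : C, actObj c (𝟙_ N) ⟶ c
  μ : ∀ (c : C) (n m : N), actObj (actObj c n) m ⟶ actObj c (n ⊗ m)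
  μ' : ∀ (c : C) (n m : N), actObj c (n ⊗ m) ⟶ actObj (actObj c n) m

variable {N}

/-- The laws of a right actegory (i.e. the coherences making it a left actegory
over the monoidal opposite). -/
structure IsRightActegory (R : RightActegoryData C N) : Prop where
  actHom_id : ∀ (c : C) (n : N), R.actHom (𝟙 c) (𝟙 n) = 𝟙 (R.actObj c n)
  actHom_comp : ∀ {c d e : C} {n p q : N} (f : c ⟶ d) (f' : d ⟶ e) (h : n ⟶ p) (h' : p ⟶ q),
      R.actHom (f ≫ f') (h ≫ h') = R.actHom f h ≫ R.actHom f' h'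
  η_iso : ∀ c, R.η c ≫ R.η' c = 𝟙 c
  η'_iso : ∀ c, R.η' c ≫ R.η c = 𝟙 _
  μ_iso : ∀ c n m, R.μ c n m ≫ R.μ' c n m = 𝟙 _
  μ'_iso : ∀ c n m, R.μ' c n m ≫ R.μ c n m = 𝟙 _
  η_nat : ∀ {c d : C} (f : c ⟶ d), f ≫ R.η d = R.η c ≫ R.actHom f (𝟙 (𝟙_ N))
  μ_nat : ∀ {c c' : C} {n n' m m' : N} (f : c ⟶ c') (h : n ⟶ n') (k : m ⟶ m'),
      R.actHom (R.actHom f h) k ≫ R.μ c' n' m' = R.μ c n m ≫ R.actHom f (h ⊗ₘ k)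
  pentagon : ∀ (c : C) (p n m : N),
      R.μ (R.actObj c p) n m ≫ R.μ c p (n ⊗ m) ≫ R.actHom (𝟙 c) (α_ p n m).inv
        = R.actHom (R.μ c p n) (𝟙 m) ≫ R.μ c (p ⊗ n) m
  triangle_left : ∀ (c : C) (m : N),
      R.η (R.actObj c m) ≫ R.μ c m (𝟙_ N) = R.actHom (𝟙 c) (ρ_ m).inv
  triangle_right : ∀ (c : C) (m : N),
      R.actHom (R.η c) (𝟙 m) ≫ R.μ c (𝟙_ N) m = R.actHom (𝟙 c) (λ_ m).inv

/-- The data of a bimodulator relating a left `M`-action and a right `N`-action on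
the same category: a natural isomorphism `ζ : m • (c ∘ n) ≅ (m • c) ∘ n`. -/
structure BimodulatorData (A : LeftActegoryData M C) (R : RightActegoryData C N) where
  ζ : ∀ (m : M) (c : C) (n : N), A.actObj m (R.actObj c n) ⟶ R.actObj (A.actObj m c) n
  ζ' : ∀ (m : M) (c : C) (n : N), R.actObj (A.actObj m c) n ⟶ A.actObj m (R.actObj c n)

/-- The laws of a biactegory: the bimodulator is a natural isomorphism satisfying
the two pentagon and the two triangle coherence laws relating it to the
structure of the two actions. -/
structure IsBiactegory {A : LeftActegoryData M C} {R : RightActegoryData C N}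
    (Z : BimodulatorData A R) : Prop where
  ζ_iso : ∀ m c n, Z.ζ m c n ≫ Z.ζ' m c n = 𝟙 _
  ζ'_iso : ∀ m c n, Z.ζ' m c n ≫ Z.ζ m c n = 𝟙 _
  ζ_nat : ∀ {m m' : M} {c c' : C} {n n' : N} (g : m ⟶ m') (f : c ⟶ c') (h : n ⟶ n'),
      A.actHom g (R.actHom f h) ≫ Z.ζ m' c' n' = Z.ζ m c n ≫ R.actHom (A.actHom g f) h
  pentagon_left : ∀ (m n : M) (c : C) (p : N),
      A.μ m n (R.actObj c p) ≫ Z.ζ (m ⊗ n) c p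
        = A.actHom (𝟙 m) (Z.ζ n c p) ≫ Z.ζ m (A.actObj n c) p ≫ R.actHom (A.μ m n c) (𝟙 p)
  pentagon_right : ∀ (p : M) (c : C) (m n : N),
      A.actHom (𝟙 p) (R.μ c m n) ≫ Z.ζ p c (m ⊗ n)
        = Z.ζ p (R.actObj c m) n ≫ R.actHom (Z.ζ p c m) (𝟙 n) ≫ R.μ (A.actObj p c) m n
  triangle_unit_left : ∀ (c : C) (m : N),
      A.η (R.actObj c m) ≫ Z.ζ (𝟙_ M) c m = R.actHom (A.η c) (𝟙 m)
  triangle_unit_right : ∀ (m : M) (c : C),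
      A.actHom (𝟙 m) (R.η c) ≫ Z.ζ m c (𝟙_ N) = R.η (A.actObj m c)

/-- The right `M`-action obtained by mirroring a left `M`-action along the braiding:
`c ∘ m := m • c`, with right unitor `η` and right multiplicator
`μ_{m,n,c} ≫ (β_{m,n} • 𝟙_c)`. -/
def mirrorRight [BraidedCategory M] (A : LeftActegoryData M C) :
    RightActegoryData C M where
  actObj c m := A.actObj m c
  actHom f g := A.actHom g f
  η c := A.η c
  η' c := A.η' c
  μ c n m := A.μ m n c ≫ A.actHom (β_ m n).hom (𝟙 c)
  μ' c n m := A.actHom (β_ m n).inv (𝟙 c) ≫ A.μ' m n c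

/-- The bimodulator of the mirroring: `ζ = μ ≫ (β • 𝟙) ≫ μ⁻¹`. -/
def mirrorBimodulator [BraidedCategory M] (A : LeftActegoryData M C) :
    BimodulatorData A (mirrorRight A) where
  ζ m c n := A.μ m n c ≫ A.actHom (β_ m n).hom (𝟙 c) ≫ A.μ' n m c
  ζ' m c n := A.μ n m c ≫ A.actHom (β_ m n).inv (𝟙 c) ≫ A.μ' m n c


section MirrorAux

open BraidedCategory

variable {A : LeftActegoryData M C} (hA : IsLeftActegory A)

private lemma flipAux {W X Y Z : C} {p : W ⟶ X} {p' : X ⟶ W} {q : X ⟶ Y} {r : W ⟶ Z} {s : Z ⟶ Y}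
    {s' : Y ⟶ Z} (hp : p' ≫ p = 𝟙 _) (hs : s ≫ s' = 𝟙 _) (h : p ≫ q = r ≫ s) :
    p' ≫ r = q ≫ s' := by
  calc p' ≫ r = p' ≫ r ≫ s ≫ s' := by rw [hs, comp_id]
    _ = p' ≫ (r ≫ s) ≫ s' := by simp only [assoc]
    _ = p' ≫ (p ≫ q) ≫ s' := by rw [h]
    _ = (p' ≫ p) ≫ q ≫ s' := by simp only [assoc]
    _ = q ≫ s' := by rw [hp, id_comp]

include hA

private lemma hcomp {x y z : M} (g : x ⟶ y) (g' : y ⟶ z) (c : C) :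
    A.actHom g (𝟙 c) ≫ A.actHom g' (𝟙 c) = A.actHom (g ≫ g') (𝟙 c) := by
  rw [← hA.actHom_comp, comp_id]

private lemma hcancel {x y : M} (φ : x ≅ y) (c : C) :
    A.actHom φ.hom (𝟙 c) ≫ A.actHom φ.inv (𝟙 c) = 𝟙 _ := by
  rw [hcomp hA, φ.hom_inv_id, hA.actHom_id]

private lemma hcancel' {x y : M} (φ : x ≅ y) (c : C) :
    A.actHom φ.inv (𝟙 c) ≫ A.actHom φ.hom (𝟙 c) = 𝟙 _ := by
  rw [hcomp hA, φ.inv_hom_id, hA.actHom_id]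

private lemma idact {m : M} {c d e : C} (u : c ⟶ d) (v : d ⟶ e) :
    A.actHom (𝟙 m) (u ≫ v) = A.actHom (𝟙 m) u ≫ A.actHom (𝟙 m) v := by
  have := hA.actHom_comp (𝟙 m) (𝟙 m) u v
  rwa [comp_id] at this

private lemma idact_inv {m : M} {c d : C} (u : c ⟶ d) (v : d ⟶ c) (huv : u ≫ v = 𝟙 c) :
    A.actHom (𝟙 m) u ≫ A.actHom (𝟙 m) v = 𝟙 _ := by
  rw [← idact hA, huv, hA.actHom_id]

private lemma exchangeR {m m' : M} (g : m ⟶ m') (n : M) (c : C) :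
    A.actHom g (𝟙 (A.actObj n c)) ≫ A.μ m' n c = A.μ m n c ≫ A.actHom (g ⊗ₘ 𝟙 n) (𝟙 c) := by
  have := hA.μ_nat g (𝟙 n) (𝟙 c)
  rwa [hA.actHom_id] at this

private lemma exchangeR' {m m' : M} (g : m ⟶ m') (n : M) (c : C) :
    A.μ' m n c ≫ A.actHom g (𝟙 (A.actObj n c)) = A.actHom (g ⊗ₘ 𝟙 n) (𝟙 c) ≫ A.μ' m' n c :=
  flipAux (hA.μ'_iso _ _ _) (hA.μ_iso _ _ _) (exchangeR hA g n c).symm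

private lemma exchangeL {n n' : M} (h : n ⟶ n') (m : M) (c : C) :
    A.actHom (𝟙 m) (A.actHom h (𝟙 c)) ≫ A.μ m n' c = A.μ m n c ≫ A.actHom (𝟙 m ⊗ₘ h) (𝟙 c) :=
  hA.μ_nat (𝟙 m) h (𝟙 c)

private lemma exchangeL' {n n' : M} (h : n ⟶ n') (m : M) (c : C) :
    A.μ' m n c ≫ A.actHom (𝟙 m) (A.actHom h (𝟙 c)) = A.actHom (𝟙 m ⊗ₘ h) (𝟙 c) ≫ A.μ' m n' c :=
  flipAux (hA.μ'_iso _ _ _) (hA.μ_iso _ _ _) (exchangeL hA h m c).symm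

private lemma pent' (m n p : M) (c : C) :
    A.μ m n (A.actObj p c) ≫ A.μ (m ⊗ n) p c
      = A.actHom (𝟙 m) (A.μ n p c) ≫ A.μ m (n ⊗ p) c ≫ A.actHom (α_ m n p).inv (𝟙 c) := by
  calc A.μ m n (A.actObj p c) ≫ A.μ (m ⊗ n) p c
      = A.μ m n (A.actObj p c) ≫ A.μ (m ⊗ n) p c ≫ A.actHom (α_ m n p).hom (𝟙 c) ≫
          A.actHom (α_ m n p).inv (𝟙 c) := by rw [hcancel hA (α_ m n p) c, comp_id]
    _ = (A.μ m n (A.actObj p c) ≫ A.μ (m ⊗ n) p c ≫ A.actHom (α_ m n p).hom (𝟙 c)) ≫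
          A.actHom (α_ m n p).inv (𝟙 c) := by simp only [assoc]
    _ = _ := by rw [hA.pentagon]; simp only [assoc]

private lemma swap1 (p m n : M) (c : C) :
    A.μ' p m (A.actObj n c) ≫ A.actHom (𝟙 p) (A.μ m n c)
      = A.μ (p ⊗ m) n c ≫ A.actHom (α_ p m n).hom (𝟙 c) ≫ A.μ' p (m ⊗ n) c := by
  have h := flipAux (hA.μ'_iso p m (A.actObj n c)) (hA.μ_iso p (m ⊗ n) c) (hA.pentagon p m n c)
  rw [h, assoc]

private lemma swap2 (m n p : M) (c : C) :
    A.actHom (𝟙 m) (A.μ' n p c) ≫ A.μ m n (A.actObj p c)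
      = A.μ m (n ⊗ p) c ≫ A.actHom (α_ m n p).inv (𝟙 c) ≫ A.μ' (m ⊗ n) p c := by
  have h := flipAux (idact_inv hA (A.μ' n p c) (A.μ n p c) (hA.μ'_iso n p c))
    (hA.μ_iso (m ⊗ n) p c) (pent' hA m n p c).symm
  rw [h, assoc]

private lemma tri_l' (m : M) (c : C) :
    A.actHom (λ_ m).inv (𝟙 c) ≫ A.μ' (𝟙_ M) m c = A.η (A.actObj m c) := by
  rw [← hA.triangle_left, assoc, hA.μ_iso, comp_id]

private lemma tri_r' (m : M) (c : C) :
    A.actHom (ρ_ m).inv (𝟙 c) ≫ A.μ' m (𝟙_ M) c = A.actHom (𝟙 m) (A.η c) := by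
  rw [← hA.triangle_right, assoc, hA.μ_iso, comp_id]

end MirrorAux

section Mgoals

open BraidedCategory

variable [BraidedCategory M]

private lemma Mgoal1 (m n p : M) :
    (α_ m n p).inv ≫ (β_ (m ⊗ n) p).hom =
      (𝟙 m ⊗ₘ (β_ n p).hom) ≫ (α_ m p n).inv ≫ ((β_ m p).hom ⊗ₘ 𝟙 n) ≫ (α_ p m n).hom := by
  simp [braiding_tensor_left_hom, MonoidalCategory.tensorHom_def]

private lemma Mgoal2 (m n p : M) :
    (α_ m n p).inv ≫ ((β_ m n).hom ⊗ₘ 𝟙 p) ≫ (β_ (n ⊗ m) p).hom ≫ (α_ p n m).inv =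
      (𝟙 m ⊗ₘ (β_ n p).hom) ≫ (β_ m (p ⊗ n)).hom := by
  rw [tensorHom_id, braiding_naturality_left_assoc]
  simp [braiding_tensor_left_hom, braiding_tensor_right_hom, MonoidalCategory.tensorHom_def]

private lemma Mgoal3 (m n p : M) :
    (𝟙 p ⊗ₘ (β_ n m).hom) ≫ (β_ p (m ⊗ n)).hom =
      (α_ p n m).inv ≫ ((β_ p n).hom ⊗ₘ 𝟙 m) ≫ (α_ n p m).hom ≫ (𝟙 n ⊗ₘ (β_ p m).hom) ≫
        (α_ n m p).inv ≫ ((β_ n m).hom ⊗ₘ 𝟙 p) := by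
  rw [id_tensorHom, braiding_naturality_right]
  simp [braiding_tensor_right_hom, MonoidalCategory.tensorHom_def]

end Mgoals

/-- **mirroring.** Let `M` be braided and `(C, •)` a left `M`-actegory.
Then `c ∘ m := m • c` (with `g • f` acting on morphism pairs), with right unitor `η`
and right multiplicator `μ_{m,n,c} ≫ (β_{m,n} • 𝟙_c)`, is a right `M`-actegory, and
together with `•` and the bimodulator
`ζ_{m,c,n} = μ_{m,n,c} ≫ (β_{m,n} • 𝟙_c) ≫ μ⁻¹_{n,m,c}` the triple `(C, •, ∘, ζ)`
is an `(M,M)`-biactegory. -/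
theorem mirroring_is_biactegory [BraidedCategory M]
    (A : LeftActegoryData M C) (hA : IsLeftActegory A) :
    IsRightActegory (mirrorRight A) ∧ IsBiactegory (mirrorBimodulator A) := by
  constructor
  · refine ⟨fun c n => hA.actHom_id n c, fun f f' h h' => hA.actHom_comp h h' f f',
      hA.η_iso, hA.η'_iso, ?_, ?_, fun f => hA.η_nat f, ?_, ?_, ?_, ?_⟩
    · intro c n m
      show (A.μ m n c ≫ A.actHom (β_ m n).hom (𝟙 c)) ≫
        (A.actHom (β_ m n).inv (𝟙 c) ≫ A.μ' m n c) = 𝟙 _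
      simp only [assoc]
      slice_lhs 2 3 => rw [hcancel hA (β_ m n) c]
      simp [hA.μ_iso]
    · intro c n m
      show (A.actHom (β_ m n).inv (𝟙 c) ≫ A.μ' m n c) ≫
        (A.μ m n c ≫ A.actHom (β_ m n).hom (𝟙 c)) = 𝟙 _
      simp only [assoc]
      slice_lhs 2 3 => rw [hA.μ'_iso]
      simp [hcancel' hA (β_ m n) c]
    · intro c c' n n' m m' f h k
      show A.actHom k (A.actHom h f) ≫ A.μ m' n' c' ≫ A.actHom (β_ m' n').hom (𝟙 c')
        = (A.μ m n c ≫ A.actHom (β_ m n).hom (𝟙 c)) ≫ A.actHom (h ⊗ₘ k) f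
      have key : A.actHom (k ⊗ₘ h) f ≫ A.actHom (β_ m' n').hom (𝟙 c')
          = A.actHom (β_ m n).hom (𝟙 c) ≫ A.actHom (h ⊗ₘ k) f := by
        rw [← hA.actHom_comp, ← hA.actHom_comp, comp_id, id_comp,
          BraidedCategory.braiding_naturality]
      slice_lhs 1 2 => rw [hA.μ_nat k h f]
      slice_lhs 2 3 => rw [key]
      simp only [assoc]
    · intro c p n m
      show (A.μ m n (A.actObj p c) ≫ A.actHom (β_ m n).hom (𝟙 (A.actObj p c))) ≫
          (A.μ (n ⊗ m) p c ≫ A.actHom (β_ (n ⊗ m) p).hom (𝟙 c)) ≫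
          A.actHom (α_ p n m).inv (𝟙 c)
        = A.actHom (𝟙 m) (A.μ n p c ≫ A.actHom (β_ n p).hom (𝟙 c)) ≫
          (A.μ m (p ⊗ n) c ≫ A.actHom (β_ m (p ⊗ n)).hom (𝟙 c))
      simp only [assoc]
      slice_lhs 2 3 => rw [exchangeR hA (β_ m n).hom p c]
      slice_lhs 1 2 => rw [pent' hA m n p c]
      simp only [assoc, id_comp, comp_id, hcomp hA]
      rw [Mgoal2 m n p, ← hcomp hA]
      slice_lhs 2 3 => rw [← exchangeL hA (β_ n p).hom m c]
      rw [idact hA]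
      simp only [assoc]
    · intro c m
      show A.η (A.actObj m c) ≫ A.μ (𝟙_ M) m c ≫ A.actHom (β_ (𝟙_ M) m).hom (𝟙 c)
        = A.actHom (ρ_ m).inv (𝟙 c)
      rw [← assoc, hA.triangle_left, hcomp hA,
        braiding_tensorUnit_left, Iso.inv_hom_id_assoc]
    · intro c m
      show A.actHom (𝟙 m) (A.η c) ≫ A.μ m (𝟙_ M) c ≫ A.actHom (β_ m (𝟙_ M)).hom (𝟙 c)
        = A.actHom (λ_ m).inv (𝟙 c)
      rw [← assoc, hA.triangle_right, hcomp hA,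
        braiding_tensorUnit_right, Iso.inv_hom_id_assoc]
  · refine ⟨?_, ?_, ?_, ?_, ?_, ?_, ?_⟩
    · intro m c n
      show (A.μ m n c ≫ A.actHom (β_ m n).hom (𝟙 c) ≫ A.μ' n m c) ≫
        (A.μ n m c ≫ A.actHom (β_ m n).inv (𝟙 c) ≫ A.μ' m n c) = 𝟙 _
      simp only [assoc]
      slice_lhs 3 4 => rw [hA.μ'_iso]
      simp only [id_comp, comp_id]
      slice_lhs 2 3 => rw [hcancel hA (β_ m n) c]
      simp [hA.μ_iso]
    · intro m c n
      show (A.μ n m c ≫ A.actHom (β_ m n).inv (𝟙 c) ≫ A.μ' m n c) ≫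
        (A.μ m n c ≫ A.actHom (β_ m n).hom (𝟙 c) ≫ A.μ' n m c) = 𝟙 _
      simp only [assoc]
      slice_lhs 3 4 => rw [hA.μ'_iso]
      simp only [id_comp, comp_id]
      slice_lhs 2 3 => rw [hcancel' hA (β_ m n) c]
      simp [hA.μ_iso]
    · intro m m' c c' n n' g f h
      show A.actHom g (A.actHom h f) ≫ A.μ m' n' c' ≫ A.actHom (β_ m' n').hom (𝟙 c') ≫
          A.μ' n' m' c'
        = (A.μ m n c ≫ A.actHom (β_ m n).hom (𝟙 c) ≫ A.μ' n m c) ≫ A.actHom h (A.actHom g f)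
      have key : A.actHom (g ⊗ₘ h) f ≫ A.actHom (β_ m' n').hom (𝟙 c')
          = A.actHom (β_ m n).hom (𝟙 c) ≫ A.actHom (h ⊗ₘ g) f := by
        rw [← hA.actHom_comp, ← hA.actHom_comp, comp_id, id_comp,
          BraidedCategory.braiding_naturality]
      have key2 : A.μ' n m c ≫ A.actHom h (A.actHom g f) = A.actHom (h ⊗ₘ g) f ≫ A.μ' n' m' c' :=
        flipAux (hA.μ'_iso _ _ _) (hA.μ_iso _ _ _) (hA.μ_nat h g f).symm
      slice_lhs 1 2 => rw [hA.μ_nat g h f]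
      slice_lhs 2 3 => rw [key]
      slice_rhs 3 4 => rw [key2]
      simp only [assoc]
    · intro m n c p
      show A.μ m n (A.actObj p c) ≫ A.μ (m ⊗ n) p c ≫
          A.actHom (β_ (m ⊗ n) p).hom (𝟙 c) ≫ A.μ' p (m ⊗ n) c
        = A.actHom (𝟙 m) (A.μ n p c ≫ A.actHom (β_ n p).hom (𝟙 c) ≫ A.μ' p n c) ≫
          (A.μ m p (A.actObj n c) ≫ A.actHom (β_ m p).hom (𝟙 (A.actObj n c)) ≫
            A.μ' p m (A.actObj n c)) ≫ A.actHom (𝟙 p) (A.μ m n c)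
      rw [idact hA, idact hA]
      simp only [assoc]
      slice_lhs 1 2 => rw [pent' hA m n p c]
      slice_rhs 3 4 => rw [swap2 hA m p n c]
      slice_rhs 5 6 => rw [exchangeR' hA (β_ m p).hom n c]
      slice_rhs 7 8 => rw [swap1 hA p m n c]
      slice_rhs 6 7 => rw [hA.μ'_iso]
      simp only [id_comp, comp_id]
      slice_rhs 2 3 => rw [exchangeL hA (β_ n p).hom m c]
      simp only [assoc, id_comp, comp_id, hcomp hA]
      rw [Mgoal1 m n p]
    · intro p c m n
      show A.actHom (𝟙 p) (A.μ n m c ≫ A.actHom (β_ n m).hom (𝟙 c)) ≫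
          A.μ p (m ⊗ n) c ≫ A.actHom (β_ p (m ⊗ n)).hom (𝟙 c) ≫ A.μ' (m ⊗ n) p c
        = (A.μ p n (A.actObj m c) ≫ A.actHom (β_ p n).hom (𝟙 (A.actObj m c)) ≫
            A.μ' n p (A.actObj m c)) ≫
          A.actHom (𝟙 n) (A.μ p m c ≫ A.actHom (β_ p m).hom (𝟙 c) ≫ A.μ' m p c) ≫
          A.μ n m (A.actObj p c) ≫ A.actHom (β_ n m).hom (𝟙 (A.actObj p c))
      rw [idact hA, idact hA, idact hA]
      simp only [assoc]
      slice_lhs 2 3 => rw [exchangeL hA (β_ n m).hom p c]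
      slice_rhs 3 4 => rw [swap1 hA n p m c]
      slice_rhs 5 6 => rw [exchangeL' hA (β_ p m).hom n c]
      slice_rhs 7 8 => rw [swap2 hA n m p c]
      slice_rhs 6 7 => rw [hA.μ'_iso]
      simp only [id_comp, comp_id]
      slice_rhs 7 8 => rw [exchangeR' hA (β_ n m).hom p c]
      slice_rhs 2 3 => rw [exchangeR hA (β_ p n).hom m c]
      slice_rhs 1 2 => rw [pent' hA p n m c]
      simp only [assoc, id_comp, comp_id, hcomp hA]
      rw [Mgoal3 m n p]
    · intro c m
      show A.η (A.actObj m c) ≫ A.μ (𝟙_ M) m c ≫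
          A.actHom (β_ (𝟙_ M) m).hom (𝟙 c) ≫ A.μ' m (𝟙_ M) c
        = A.actHom (𝟙 m) (A.η c)
      slice_lhs 1 2 => rw [hA.triangle_left]
      slice_lhs 1 2 => rw [hcomp hA]
      rw [braiding_tensorUnit_left, Iso.inv_hom_id_assoc]
      exact tri_r' hA m c
    · intro m c
      show A.actHom (𝟙 m) (A.η c) ≫ A.μ m (𝟙_ M) c ≫
          A.actHom (β_ m (𝟙_ M)).hom (𝟙 c) ≫ A.μ' (𝟙_ M) m c
        = A.η (A.actObj m c)
      slice_lhs 1 2 => rw [hA.triangle_right]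
      slice_lhs 1 2 => rw [hcomp hA]
      rw [braiding_tensorUnit_right, Iso.inv_hom_id_assoc]
      exact tri_l' hA m c
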